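/- Let ε ∈ (1,2] and suppose V(p) is invertible. Then ∑_{a∈A} ∑_{b∈A} p_a p_b · |φ̄_a^⊤ V(p)^{-1} φ̄_b|^ε ≤ 4 · d^{ε/2} · (1 − max_{a∈A} p_a)^{2−ε}. -/

import Mathlib

open Matrix Finset

/-- Mean feature vector `μ(p) = ∑_a p_a φ_a`. -/
noncomputable def featMean {A : Type*} [Fintype A] {d : ℕ} (φ : A → Fin d → ℝ)
    (p : A → ℝ) : Fin d → ℝ :=
  ∑ a, p a • φ a

/-- Centered feature covariance matrix `V(p) = ∑_a p_a φ̄_a φ̄_a^⊤`, where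
`φ̄_a = φ_a − μ(p)`. -/
noncomputable def covMat {A : Type*} [Fintype A] {d : ℕ} (φ : A → Fin d → ℝ)
    (p : A → ℝ) : Matrix (Fin d) (Fin d) ℝ :=
  ∑ a, p a • Matrix.vecMulVec (φ a - featMean φ p) (φ a - featMean φ p)


lemma holder_aux {ι : Type*} (s : Finset ι) (w v : ι → ℝ)
    (hw : ∀ i ∈ s, 0 ≤ w i) (hv : ∀ i ∈ s, 0 ≤ v i)
    (θ : ℝ) (hθ0 : 0 < θ) (hθ1 : θ ≤ 1) :
    ∑ i ∈ s, w i * v i ^ θ ≤ (∑ i ∈ s, w i * v i) ^ θ * (∑ i ∈ s, w i) ^ (1 - θ) := by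
  set T := ∑ i ∈ s, w i with hT
  have hT0 : 0 ≤ T := Finset.sum_nonneg hw
  rcases eq_or_lt_of_le hT0 with h0 | hpos
  · -- T = 0 : all w i = 0 on s
    have hw0 : ∀ i ∈ s, w i = 0 := by
      intro i hi
      exact (Finset.sum_eq_zero_iff_of_nonneg hw).mp h0.symm i hi
    have h1 : ∑ i ∈ s, w i * v i ^ θ = 0 :=
      Finset.sum_eq_zero fun i hi => by rw [hw0 i hi, zero_mul]
    have h2 : ∑ i ∈ s, w i * v i = 0 :=
      Finset.sum_eq_zero fun i hi => by rw [hw0 i hi, zero_mul]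
    rw [h1, h2]
    positivity
  · have key := Real.arith_mean_le_rpow_mean s (fun i => w i / T) (fun i => v i ^ θ)
      (fun i hi => div_nonneg (hw i hi) hT0)
      (by rw [← Finset.sum_div]; field_simp; exact hT.symm)
      (fun i hi => Real.rpow_nonneg (hv i hi) θ)
      (p := 1/θ) (by rw [le_div_iff₀ hθ0]; linarith)
    have hsimp : ∀ i ∈ s, (v i ^ θ) ^ (1/θ) = v i := fun i hi => by
      rw [← Real.rpow_mul (hv i hi), mul_one_div, div_self hθ0.ne', Real.rpow_one]
    have hR : ∑ x ∈ s, w x / T * (v x ^ θ) ^ (1/θ) = (∑ i ∈ s, w i * v i) / T := by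
      rw [Finset.sum_div]
      exact Finset.sum_congr rfl fun i hi => by rw [hsimp i hi]; ring
    rw [hR, one_div_one_div] at key
    have h1 : ∑ i ∈ s, w i / T * v i ^ θ = (∑ i ∈ s, w i * v i ^ θ) / T := by
      rw [Finset.sum_div]; exact Finset.sum_congr rfl fun i _ => by ring
    rw [h1] at key
    have hS0 : 0 ≤ ∑ i ∈ s, w i * v i :=
      Finset.sum_nonneg fun i hi => mul_nonneg (hw i hi) (hv i hi)
    calc ∑ i ∈ s, w i * v i ^ θ = (∑ i ∈ s, w i * v i ^ θ) / T * T := by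
          field_simp
      _ ≤ ((∑ i ∈ s, w i * v i) / T) ^ θ * T := by
          apply mul_le_mul_of_nonneg_right key hpos.le
      _ = (∑ i ∈ s, w i * v i) ^ θ * (T ^ (1:ℝ) / T ^ θ) := by
          rw [Real.div_rpow hS0 hpos.le, Real.rpow_one]; ring
      _ = (∑ i ∈ s, w i * v i) ^ θ * T ^ (1 - θ) := by
          rw [← Real.rpow_sub hpos]


lemma bil_aux {A : Type*} [Fintype A] {d : ℕ} (p : A → ℝ) (u : A → Fin d → ℝ)
    (x y : Fin d → ℝ) :
    x ⬝ᵥ ((∑ a, p a • Matrix.vecMulVec (u a) (u a)) *ᵥ y)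
      = ∑ a, p a * ((u a ⬝ᵥ x) * (u a ⬝ᵥ y)) := by
  simp only [Matrix.mulVec, dotProduct, Matrix.sum_apply, Matrix.smul_apply,
    Matrix.vecMulVec_apply, smul_eq_mul, Finset.mul_sum, Finset.sum_mul]
  have comm3 : ∀ (g : Fin d → Fin d → A → ℝ),
      ∑ i, ∑ j, ∑ a, g i j a = ∑ a, ∑ i, ∑ j, g i j a := fun g =>
    calc ∑ i, ∑ j, ∑ a, g i j a
        = ∑ i, ∑ a, ∑ j, g i j a :=
          Finset.sum_congr rfl fun i _ => Finset.sum_comm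
      _ = ∑ a, ∑ i, ∑ j, g i j a := Finset.sum_comm
  rw [comm3]
  refine Finset.sum_congr rfl fun a _ => ?_
  rw [Finset.sum_comm]
  refine Finset.sum_congr rfl fun i _ => Finset.sum_congr rfl fun j _ => by ring

lemma trace_aux {A : Type*} [Fintype A] {d : ℕ} (p : A → ℝ) (u : A → Fin d → ℝ)
    (M : Matrix (Fin d) (Fin d) ℝ) :
    ∑ a, p a * (u a ⬝ᵥ (M *ᵥ u a))
      = Matrix.trace (M * ∑ a, p a • Matrix.vecMulVec (u a) (u a)) := by
  simp only [Matrix.trace, Matrix.diag, Matrix.mul_apply, Matrix.mulVec, dotProduct,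
    Matrix.sum_apply, Matrix.smul_apply, Matrix.vecMulVec_apply, smul_eq_mul,
    Finset.mul_sum, Finset.sum_mul]
  rw [Finset.sum_comm]
  refine Finset.sum_congr rfl fun i _ => ?_
  rw [Finset.sum_comm]
  refine Finset.sum_congr rfl fun j _ => ?_
  refine Finset.sum_congr rfl fun a _ => ?_
  ring

lemma split_sum {A : Type*} [Fintype A] [DecidableEq A] (t : A) (F : A → A → ℝ) :
    ∑ a, ∑ b, F a b
      = F t t + (∑ b ∈ Finset.univ.erase t, F t b) + (∑ a ∈ Finset.univ.erase t, F a t)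
        + ∑ a ∈ Finset.univ.erase t, ∑ b ∈ Finset.univ.erase t, F a b := by
  rw [← Finset.add_sum_erase _ _ (Finset.mem_univ t),
      ← Finset.add_sum_erase _ (fun b => F t b) (Finset.mem_univ t),
      Finset.sum_congr rfl
        (fun a (_ : a ∈ Finset.univ.erase t) =>
          (Finset.add_sum_erase _ (fun b => F a b) (Finset.mem_univ t)).symm),
      Finset.sum_add_distrib]
  ring

lemma bound_aux {A : Type*} [Fintype A] [Nonempty A] {d : ℕ} (hd : 1 ≤ d)
    (p : A → ℝ) (q : A → A → ℝ) (hp : ∀ a, 0 ≤ p a) (hp1 : ∑ a, p a = 1)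
    (hqsymm : ∀ a b, q a b = q b a)
    (hrep : ∀ a c, ∑ b, p b * (q a b * q c b) = q a c)
    (htrace : ∑ a, p a * q a a = (d : ℝ))
    (hkey : ∀ a, p a * q a a ≤ 1 - p a)
    (ε : ℝ) (hε1 : 1 < ε) (hε2 : ε ≤ 2) :
    ∑ a : A, ∑ b : A, p a * p b * |q a b| ^ ε
      ≤ 4 * (d : ℝ) ^ (ε / 2) * (1 - Finset.univ.sup' Finset.univ_nonempty p) ^ (2 - ε) := by
  classical
  obtain ⟨t, -, hpt⟩ := Finset.exists_mem_eq_sup' Finset.univ_nonempty p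
  set pm := Finset.univ.sup' Finset.univ_nonempty p with hpm
  set E := Finset.univ.erase t with hE
  -- basic facts
  have hple : ∀ a, p a ≤ pm := fun a => Finset.le_sup' p (Finset.mem_univ a)
  have hpt1 : p t ≤ 1 := by
    rw [← hp1]
    exact Finset.single_le_sum (fun a _ => hp a) (Finset.mem_univ t)
  have hpm1 : pm ≤ 1 := hpt ▸ hpt1
  have hpm_pos : 0 < pm := by
    by_contra h
    push_neg at h
    have h0 : ∀ a ∈ Finset.univ, p a = 0 :=
      fun a _ => le_antisymm (le_trans (hple a) h) (hp a)
    rw [Finset.sum_eq_zero h0] at hp1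
    norm_num at hp1
  have h1pm : 0 ≤ 1 - pm := by linarith
  have h1pm1 : 1 - pm ≤ 1 := by linarith
  have hEsum : ∑ b ∈ E, p b = 1 - pm := by
    have := Finset.add_sum_erase Finset.univ p (Finset.mem_univ t)
    rw [hp1, ← hpt] at this
    linarith
  have hε0 : (0:ℝ) < ε := by linarith
  have hθ0 : (0:ℝ) < ε / 2 := by linarith
  have hθ1 : ε / 2 ≤ 1 := by linarith
  -- nonnegativity of diagonal
  have hqnn : ∀ a, 0 ≤ q a a := fun a => by
    rw [← hrep a a]
    exact Finset.sum_nonneg fun b _ => mul_nonneg (hp b) (mul_self_nonneg _)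
  have hqtt : q t t ≤ (1 - pm) / pm := by
    rw [le_div_iff₀ hpm_pos, mul_comm]
    calc pm * q t t = p t * q t t := by rw [hpt]
      _ ≤ 1 - p t := hkey t
      _ = 1 - pm := by rw [hpt]
  -- |x|^ε = (x^2)^(ε/2)
  have habs : ∀ x : ℝ, |x| ^ ε = (x ^ 2) ^ (ε / 2) := by
    intro x
    rw [show (x ^ 2 : ℝ) = |x| ^ ((2:ℕ):ℝ) from by
        rw [Real.rpow_natCast]; exact (sq_abs x).symm,
      ← Real.rpow_mul (abs_nonneg x)]
    congr 1
    push_cast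
    ring
  -- x ≤ x^(2-ε) for x ∈ [0,1]
  have hx21 : ∀ x : ℝ, 0 ≤ x → x ≤ 1 → x ≤ x ^ (2 - ε) := by
    intro x hx0 hx1
    rcases eq_or_lt_of_le hx0 with h | h
    · calc x = 0 := h.symm
        _ ≤ x ^ (2 - ε) := Real.rpow_nonneg hx0 _
    · calc x = x ^ (1:ℝ) := (Real.rpow_one x).symm
        _ ≤ x ^ (2 - ε) := Real.rpow_le_rpow_of_exponent_ge h hx1 (by linarith)
  -- second moment sums
  have hsq : ∀ a, ∑ b, p b * q a b ^ 2 = q a a := by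
    intro a
    rw [← hrep a a]
    exact Finset.sum_congr rfl fun b _ => by ring
  have hd2 : ∑ a, ∑ b, p a * p b * q a b ^ 2 = (d : ℝ) := by
    rw [← htrace]
    refine Finset.sum_congr rfl fun a _ => ?_
    rw [← hsq a, Finset.mul_sum]
    exact Finset.sum_congr rfl fun b _ => by ring
  -- Part 1 : diagonal star term
  have P1 : p t * p t * |q t t| ^ ε ≤ (1 - pm) ^ (2 - ε) := by
    rw [abs_of_nonneg (hqnn t), ← hpt]
    calc pm * pm * q t t ^ ε ≤ pm * pm * ((1 - pm) / pm) ^ ε := by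
          have := Real.rpow_le_rpow (hqnn t) hqtt hε0.le
          nlinarith [Real.rpow_nonneg (hqnn t) ε, hpm_pos]
      _ = pm ^ (2 - ε) * (1 - pm) ^ ε := by
          have hne : (pm:ℝ) ^ ε ≠ 0 := (Real.rpow_pos_of_pos hpm_pos _).ne'
          have e2 : pm ^ ((2:ℝ) - ε) * pm ^ ε = pm * pm := by
            rw [← Real.rpow_add' hpm_pos.le (by intro h; linarith)]
            rw [show (2:ℝ) - ε + ε = ((2:ℕ):ℝ) by push_cast; ring,
              Real.rpow_natCast]
            ring
          rw [Real.div_rpow h1pm hpm_pos.le, ← e2]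
          field_simp
      _ ≤ 1 * (1 - pm) ^ ε := by
          have h1 : pm ^ (2 - ε) ≤ 1 := Real.rpow_le_one hpm_pos.le hpm1 (by linarith)
          have h2 : (0:ℝ) ≤ (1 - pm) ^ ε := Real.rpow_nonneg h1pm _
          nlinarith
      _ ≤ (1 - pm) ^ (2 - ε) := by
          rw [one_mul]
          rcases eq_or_lt_of_le h1pm with h | h
          · rw [← h, Real.zero_rpow hε0.ne']
            exact Real.rpow_nonneg (le_refl 0) _
          · exact Real.rpow_le_rpow_of_exponent_ge h h1pm1 (by linarith)
  -- Part 2 : cross terms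
  have P2 : ∑ b ∈ E, p t * p b * |q t b| ^ ε ≤ (1 - pm) ^ (2 - ε) := by
    have step : ∑ b ∈ E, p b * |q t b| ^ ε
        ≤ (q t t) ^ (ε/2) * (1 - pm) ^ (1 - ε/2) := by
      calc ∑ b ∈ E, p b * |q t b| ^ ε
          = ∑ b ∈ E, p b * (q t b ^ 2) ^ (ε/2) := by
            exact Finset.sum_congr rfl fun b _ => by rw [habs]
        _ ≤ (∑ b ∈ E, p b * q t b ^ 2) ^ (ε/2) * (∑ b ∈ E, p b) ^ (1 - ε/2) :=
            holder_aux E p (fun b => q t b ^ 2) (fun b _ => hp b)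
              (fun b _ => sq_nonneg _) (ε/2) hθ0 hθ1
        _ ≤ (q t t) ^ (ε/2) * (1 - pm) ^ (1 - ε/2) := by
            rw [hEsum]
            have hsub : ∑ b ∈ E, p b * q t b ^ 2 ≤ q t t := by
              rw [← hsq t]
              exact Finset.sum_le_sum_of_subset_of_nonneg
                (Finset.subset_univ E)
                (fun b _ _ => mul_nonneg (hp b) (sq_nonneg _))
            have h1 : (∑ b ∈ E, p b * q t b ^ 2) ^ (ε/2) ≤ (q t t) ^ (ε/2) :=
              Real.rpow_le_rpow
                (Finset.sum_nonneg fun b _ => mul_nonneg (hp b) (sq_nonneg _))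
                hsub hθ0.le
            exact mul_le_mul_of_nonneg_right h1 (Real.rpow_nonneg h1pm _)
    calc ∑ b ∈ E, p t * p b * |q t b| ^ ε
        = pm * ∑ b ∈ E, p b * |q t b| ^ ε := by
          rw [Finset.mul_sum, ← hpt]
          exact Finset.sum_congr rfl fun b _ => by ring
      _ ≤ pm * ((q t t) ^ (ε/2) * (1 - pm) ^ (1 - ε/2)) :=
          mul_le_mul_of_nonneg_left step hpm_pos.le
      _ ≤ pm * (((1 - pm) / pm) ^ (ε/2) * (1 - pm) ^ (1 - ε/2)) := by
          have h1 : (q t t) ^ (ε/2) ≤ ((1 - pm) / pm) ^ (ε/2) :=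
            Real.rpow_le_rpow (hqnn t) hqtt hθ0.le
          have h2 : (0:ℝ) ≤ (1 - pm) ^ (1 - ε/2) := Real.rpow_nonneg h1pm _
          exact mul_le_mul_of_nonneg_left (mul_le_mul_of_nonneg_right h1 h2) hpm_pos.le
      _ = pm ^ (1 - ε/2) * (1 - pm) := by
          have hne : (pm:ℝ) ^ (ε/2) ≠ 0 := (Real.rpow_pos_of_pos hpm_pos _).ne'
          have e1 : (1 - pm) ^ (ε/2) * (1 - pm) ^ (1 - ε/2) = 1 - pm := by
            rw [← Real.rpow_add' h1pm (by intro h; linarith)]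
            rw [show ε/2 + (1 - ε/2) = 1 by ring, Real.rpow_one]
          have e2 : pm ^ (1 - ε/2) * pm ^ (ε/2) = pm := by
            rw [← Real.rpow_add' hpm_pos.le (by intro h; linarith)]
            rw [show 1 - ε/2 + ε/2 = 1 by ring, Real.rpow_one]
          rw [Real.div_rpow h1pm hpm_pos.le,
            show (1 - pm : ℝ) ^ (ε/2) / pm ^ (ε/2) * (1 - pm) ^ (1 - ε/2)
              = ((1 - pm) ^ (ε/2) * (1 - pm) ^ (1 - ε/2)) / pm ^ (ε/2) by ring,
            e1]
          rw [show pm ^ (1 - ε/2) = pm / pm ^ (ε/2) from (eq_div_iff hne).mpr e2]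
          ring
      _ ≤ 1 - pm := by
          have h1 : pm ^ (1 - ε/2) ≤ 1 := Real.rpow_le_one hpm_pos.le hpm1 (by linarith)
          nlinarith
      _ ≤ (1 - pm) ^ (2 - ε) := hx21 _ h1pm h1pm1
  -- Part 3 : cross terms, other side
  have P3 : ∑ a ∈ E, p a * p t * |q a t| ^ ε ≤ (1 - pm) ^ (2 - ε) := by
    calc ∑ a ∈ E, p a * p t * |q a t| ^ ε
        = ∑ a ∈ E, p t * p a * |q t a| ^ ε :=
          Finset.sum_congr rfl fun a _ => by rw [hqsymm a t]; ring
      _ ≤ (1 - pm) ^ (2 - ε) := P2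
  -- Part 4 : off-off terms
  have P4 : ∑ a ∈ E, ∑ b ∈ E, p a * p b * |q a b| ^ ε
      ≤ (d : ℝ) ^ (ε/2) * (1 - pm) ^ (2 - ε) := by
    have hprod : ∑ a ∈ E, ∑ b ∈ E, p a * p b * |q a b| ^ ε
        = ∑ x ∈ E ×ˢ E, (p x.1 * p x.2) * (q x.1 x.2 ^ 2) ^ (ε/2) := by
      rw [Finset.sum_product]
      exact Finset.sum_congr rfl fun a _ => Finset.sum_congr rfl fun b _ => by
        rw [habs]
    have hA : ∑ x ∈ E ×ˢ E, (p x.1 * p x.2) * q x.1 x.2 ^ 2 ≤ (d : ℝ) := by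
      rw [← hd2, ← Finset.sum_product']
      exact Finset.sum_le_sum_of_subset_of_nonneg
        (Finset.subset_univ _)
        (fun x _ _ => mul_nonneg (mul_nonneg (hp _) (hp _)) (sq_nonneg _))
    have hB : ∑ x ∈ E ×ˢ E, p x.1 * p x.2 = (1 - pm) ^ (2:ℕ) := by
      rw [sq, ← hEsum, Finset.sum_mul_sum]
      rw [Finset.sum_product]
    rw [hprod]
    calc ∑ x ∈ E ×ˢ E, (p x.1 * p x.2) * (q x.1 x.2 ^ 2) ^ (ε/2)
        ≤ (∑ x ∈ E ×ˢ E, (p x.1 * p x.2) * q x.1 x.2 ^ 2) ^ (ε/2)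
            * (∑ x ∈ E ×ˢ E, p x.1 * p x.2) ^ (1 - ε/2) :=
          holder_aux _ _ _ (fun x _ => mul_nonneg (hp _) (hp _))
            (fun x _ => sq_nonneg _) (ε/2) hθ0 hθ1
      _ ≤ (d : ℝ) ^ (ε/2) * (1 - pm) ^ (2 - ε) := by
          have h1 : (∑ x ∈ E ×ˢ E, (p x.1 * p x.2) * q x.1 x.2 ^ 2) ^ (ε/2)
              ≤ (d : ℝ) ^ (ε/2) :=
            Real.rpow_le_rpow
              (Finset.sum_nonneg fun x _ =>
                mul_nonneg (mul_nonneg (hp _) (hp _)) (sq_nonneg _))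
              hA hθ0.le
          have h2 : (∑ x ∈ E ×ˢ E, p x.1 * p x.2) ^ (1 - ε/2)
              = (1 - pm) ^ (2 - ε) := by
            rw [hB]
            rw [show ((1 - pm) ^ (2:ℕ) : ℝ) = (1 - pm) ^ (2:ℝ) by
              rw [← Real.rpow_natCast (1 - pm) 2]; norm_num]
            rw [← Real.rpow_mul h1pm]
            norm_num
            ring_nf
          rw [h2]
          exact mul_le_mul_of_nonneg_right h1 (Real.rpow_nonneg h1pm _)
  -- assemble
  have hone : (1:ℝ) ≤ (d : ℝ) ^ (ε/2) := by
    calc (1:ℝ) = 1 ^ (ε/2) := (Real.one_rpow _).symm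
      _ ≤ (d : ℝ) ^ (ε/2) :=
        Real.rpow_le_rpow zero_le_one (by exact_mod_cast hd) hθ0.le
  have hnn : (0:ℝ) ≤ (1 - pm) ^ (2 - ε) := Real.rpow_nonneg h1pm _
  rw [split_sum t (fun a b => p a * p b * |q a b| ^ ε)]
  nlinarith [P1, P2, P3, P4]

lemma main_aux {A : Type*} [Fintype A] [Nonempty A] {d : ℕ} (hd : 1 ≤ d)
    (u : A → Fin d → ℝ) (p : A → ℝ) (hp : ∀ a, 0 ≤ p a) (hp1 : ∑ a, p a = 1)
    (hu0 : ∑ a, p a • u a = 0)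
    (V : Matrix (Fin d) (Fin d) ℝ)
    (hVdef : V = ∑ a, p a • Matrix.vecMulVec (u a) (u a))
    (hV : IsUnit V.det)
    (ε : ℝ) (hε1 : 1 < ε) (hε2 : ε ≤ 2) :
    ∑ a : A, ∑ b : A, p a * p b * |u a ⬝ᵥ (V⁻¹ *ᵥ u b)| ^ ε
      ≤ 4 * (d : ℝ) ^ (ε / 2) * (1 - Finset.univ.sup' Finset.univ_nonempty p) ^ (2 - ε) := by
  classical
  set W := V⁻¹ with hW
  -- symmetry of V and W
  have hVsym : Vᵀ = V := by
    rw [hVdef]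
    ext i j
    simp only [Matrix.transpose_apply, Matrix.sum_apply, Matrix.smul_apply,
      Matrix.vecMulVec_apply, smul_eq_mul]
    exact Finset.sum_congr rfl fun a _ => by ring
  have hWsym : Wᵀ = W := by
    rw [hW, Matrix.transpose_nonsing_inv, hVsym]
  have hWV : W * V = 1 := Matrix.nonsing_inv_mul V hV
  have hVW : V * W = 1 := Matrix.mul_nonsing_inv V hV
  have hdotW : ∀ v w : Fin d → ℝ, v ⬝ᵥ (W *ᵥ w) = (W *ᵥ v) ⬝ᵥ w := by
    intro v w
    rw [Matrix.dotProduct_mulVec, ← hWsym, Matrix.vecMul_transpose, hWsym]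
  have hbil : ∀ x y : Fin d → ℝ,
      x ⬝ᵥ (V *ᵥ y) = ∑ a, p a * ((u a ⬝ᵥ x) * (u a ⬝ᵥ y)) := by
    intro x y
    rw [hVdef]
    exact bil_aux p u x y
  have hqsymm : ∀ a b, u a ⬝ᵥ (W *ᵥ u b) = u b ⬝ᵥ (W *ᵥ u a) := by
    intro a b
    rw [hdotW, dotProduct_comm]
  have hrep : ∀ a c, ∑ b, p b * ((u a ⬝ᵥ (W *ᵥ u b)) * (u c ⬝ᵥ (W *ᵥ u b)))
      = u a ⬝ᵥ (W *ᵥ u c) := by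
    intro a c
    have e : ∀ b, u a ⬝ᵥ (W *ᵥ u b) = u b ⬝ᵥ (W *ᵥ u a) := fun b => hqsymm a b
    calc ∑ b, p b * ((u a ⬝ᵥ (W *ᵥ u b)) * (u c ⬝ᵥ (W *ᵥ u b)))
        = ∑ b, p b * ((u b ⬝ᵥ (W *ᵥ u a)) * (u b ⬝ᵥ (W *ᵥ u c))) :=
          Finset.sum_congr rfl fun b _ => by rw [hqsymm a b, hqsymm c b]
      _ = (W *ᵥ u a) ⬝ᵥ (V *ᵥ (W *ᵥ u c)) := (hbil _ _).symm
      _ = (W *ᵥ u a) ⬝ᵥ ((V * W) *ᵥ u c) := by rw [Matrix.mulVec_mulVec]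
      _ = (W *ᵥ u a) ⬝ᵥ u c := by rw [hVW, Matrix.one_mulVec]
      _ = u a ⬝ᵥ (W *ᵥ u c) := (hdotW _ _).symm
  have htrace : ∑ a, p a * (u a ⬝ᵥ (W *ᵥ u a)) = (d : ℝ) := by
    rw [trace_aux p u W, ← hVdef, hWV, Matrix.trace_one]
    simp
  have hdot0 : ∀ x : Fin d → ℝ, ∑ a, p a * (u a ⬝ᵥ x) = 0 := by
    intro x
    calc ∑ a, p a * (u a ⬝ᵥ x)
        = ∑ a, ∑ i, p a * (u a i * x i) := by
          simp [dotProduct, Finset.mul_sum]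
      _ = ∑ i, ∑ a, p a * (u a i * x i) := Finset.sum_comm
      _ = (∑ a, p a • u a) ⬝ᵥ x := by
          simp only [dotProduct, Finset.sum_apply, Pi.smul_apply, smul_eq_mul,
            Finset.sum_mul]
          exact Finset.sum_congr rfl fun i _ =>
            Finset.sum_congr rfl fun a _ => by ring
      _ = 0 := by rw [hu0, zero_dotProduct]
  have hkey : ∀ a, p a * (u a ⬝ᵥ (W *ᵥ u a)) ≤ 1 - p a := by
    intro a
    have hpa1 : p a ≤ 1 := by
      rw [← hp1]
      exact Finset.single_le_sum (fun b _ => hp b) (Finset.mem_univ a)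
    have hsq : ∑ b, p b * (u a ⬝ᵥ (W *ᵥ u b)) ^ 2 = u a ⬝ᵥ (W *ᵥ u a) := by
      rw [← hrep a a]
      exact Finset.sum_congr rfl fun b _ => by ring
    have hs0 : 0 ≤ u a ⬝ᵥ (W *ᵥ u a) := by
      rw [← hsq]
      exact Finset.sum_nonneg fun b _ => mul_nonneg (hp b) (sq_nonneg _)
    have hzero : ∑ b, p b * (u a ⬝ᵥ (W *ᵥ u b)) = 0 := by
      calc ∑ b, p b * (u a ⬝ᵥ (W *ᵥ u b))
          = ∑ b, p b * (u b ⬝ᵥ (W *ᵥ u a)) :=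
            Finset.sum_congr rfl fun b _ => by rw [hqsymm a b]
        _ = 0 := hdot0 _
    have h1 := Finset.add_sum_erase Finset.univ
      (fun b => p b * (u a ⬝ᵥ (W *ᵥ u b))) (Finset.mem_univ a)
    rw [hzero] at h1
    have h2 := Finset.add_sum_erase Finset.univ
      (fun b => p b * (u a ⬝ᵥ (W *ᵥ u b)) ^ 2) (Finset.mem_univ a)
    rw [hsq] at h2
    have hEa : ∑ b ∈ Finset.univ.erase a, p b = 1 - p a := by
      have h := Finset.add_sum_erase Finset.univ p (Finset.mem_univ a)
      rw [hp1] at h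
      linarith
    have base := Finset.sum_mul_sq_le_sq_mul_sq (Finset.univ.erase a)
      (fun b => Real.sqrt (p b)) (fun b => Real.sqrt (p b) * (u a ⬝ᵥ (W *ᵥ u b)))
    rw [Finset.sum_congr rfl (fun b (_ : b ∈ Finset.univ.erase a) =>
          show Real.sqrt (p b) * (Real.sqrt (p b) * (u a ⬝ᵥ (W *ᵥ u b)))
              = p b * (u a ⬝ᵥ (W *ᵥ u b)) by
            rw [← mul_assoc, Real.mul_self_sqrt (hp b)]),
        Finset.sum_congr rfl (fun b (_ : b ∈ Finset.univ.erase a) =>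
          show Real.sqrt (p b) ^ 2 = p b from Real.sq_sqrt (hp b)),
        Finset.sum_congr rfl (fun b (_ : b ∈ Finset.univ.erase a) =>
          show (Real.sqrt (p b) * (u a ⬝ᵥ (W *ᵥ u b))) ^ 2
              = p b * (u a ⬝ᵥ (W *ᵥ u b)) ^ 2 by
            rw [mul_pow, Real.sq_sqrt (hp b)]),
        hEa] at base
    -- base : (∑ erase, p b * q b)^2 ≤ (1 - p a) * ∑ erase, p b * q b ^ 2
    set s := u a ⬝ᵥ (W *ᵥ u a) with hs
    have key2 : (p a * s) ^ 2 ≤ (1 - p a) * (s - p a * s ^ 2) := by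
      have e1 : ∑ b ∈ Finset.univ.erase a, p b * (u a ⬝ᵥ (W *ᵥ u b)) = -(p a * s) := by
        linarith
      have e2 : ∑ b ∈ Finset.univ.erase a, p b * (u a ⬝ᵥ (W *ᵥ u b)) ^ 2
          = s - p a * s ^ 2 := by linarith
      rw [e1, e2] at base
      nlinarith [base]
    have h3 : p a * s ^ 2 ≤ (1 - p a) * s := by nlinarith [key2]
    rcases eq_or_lt_of_le hs0 with h | h
    · rw [← h]
      simp
      linarith
    · nlinarith [h3, h]
  exact bound_aux hd p (fun a b => u a ⬝ᵥ (W *ᵥ u b)) hp hp1 hqsymm hrep htrace hkey ε hε1 hε2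

/-- Lemma 10: variance bound for the variance-reduced linear loss estimator.
For `ε ∈ (1,2]` and `V(p)` invertible,
`∑_a ∑_b p_a p_b |φ̄_a^⊤ V(p)⁻¹ φ̄_b|^ε ≤ 4 d^{ε/2} (1 − max_a p_a)^{2−ε}`. -/
theorem vr_estimator_variance_bound
    {A : Type*} [Fintype A] [Nonempty A] {d : ℕ} (hd : 1 ≤ d)
    (φ : A → Fin d → ℝ) (p : A → ℝ)
    (hp : ∀ a, 0 ≤ p a) (hp1 : ∑ a, p a = 1)
    (hV : IsUnit (covMat φ p).det)
    (ε : ℝ) (hε1 : 1 < ε) (hε2 : ε ≤ 2) :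
    ∑ a : A, ∑ b : A, p a * p b *
        |(φ a - featMean φ p) ⬝ᵥ ((covMat φ p)⁻¹ *ᵥ (φ b - featMean φ p))| ^ ε
      ≤ 4 * (d : ℝ) ^ (ε / 2) * (1 - Finset.univ.sup' Finset.univ_nonempty p) ^ (2 - ε) := by
  have hu0 : ∑ a, p a • (φ a - featMean φ p) = (0 : Fin d → ℝ) := by
    have h : ∑ a, p a • (φ a - featMean φ p)
        = (∑ a, p a • φ a) - (∑ a, p a) • featMean φ p := by
      rw [Finset.sum_smul, ← Finset.sum_sub_distrib]
      exact Finset.sum_congr rfl fun a _ => smul_sub _ _ _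
    rw [h, hp1, one_smul, featMean, sub_self]
  exact main_aux hd (fun a => φ a - featMean φ p) p hp hp1 hu0 (covMat φ p) rfl hV
    ε hε1 hε2
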